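/- Let f : {±1}^n → [-1,1] be a function of degree d, and let ℓ ≥ 0. Then the degree-ℓ homogeneous part f_ℓ satisfies ‖f_ℓ‖_∞ ≤ |C(d,ℓ)| if d ≡ ℓ (mod 2), and ‖f_ℓ‖_∞ ≤ |C(d-1,ℓ)| otherwise, where C(d,ℓ) denotes the coefficient of z^ℓ in the degree-d Chebyshev polynomial T_d. -/

import Mathlib

/-- The sign ±1 corresponding to a boolean: `true ↦ 1`, `false ↦ -1`. -/
noncomputable def sgn (b : Bool) : ℝ := if b then 1 else -1

/-- The character (monomial) `χ_S(x) = ∏_{j ∈ S} x_j` on the cube `{±1}^n`. -/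
noncomputable def chi {n : ℕ} (S : Finset (Fin n)) (x : Fin n → Bool) : ℝ :=
  ∏ i ∈ S, sgn (x i)

/-- The Fourier coefficient `f̂(S) = E[f(X) χ_S(X)]` for `X` uniform on `{±1}^n`. -/
noncomputable def fcoeff {n : ℕ} (f : (Fin n → Bool) → ℝ) (S : Finset (Fin n)) : ℝ :=
  (∑ x : Fin n → Bool, f x * chi S x) / 2 ^ n

/-- The degree-`ℓ` homogeneous part `f_ℓ(x) = ∑_{|S| = ℓ} f̂(S) χ_S(x)`. -/
noncomputable def homPart {n : ℕ} (f : (Fin n → Bool) → ℝ) (ℓ : ℕ) (x : Fin n → Bool) : ℝ :=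
  ∑ S ∈ Finset.univ.filter (fun S : Finset (Fin n) => S.card = ℓ), fcoeff f S * chi S x

/-- `C(d, ℓ)`: the coefficient of `z^ℓ` in the degree-`d` Chebyshev polynomial `T_d`. -/
noncomputable def chebCoeff (d ℓ : ℕ) : ℝ := (Polynomial.Chebyshev.T ℝ (d : ℤ)).coeff ℓ


set_option autoImplicit false
set_option maxHeartbeats 1000000

open Polynomial Real Finset



/-- Sign pattern: `g` has only coefficients of parity `D % 2` up to degree `D`,
with signs alternating like `(-1)^((D-t)/2)`. -/
def Pat (D : ℕ) (g : ℝ[X]) : Prop :=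
  ∀ t : ℕ, (t ≤ D ∧ t % 2 = D % 2 → 0 ≤ (-1:ℝ)^((D-t)/2) * g.coeff t)
    ∧ (¬(t ≤ D ∧ t % 2 = D % 2) → g.coeff t = 0)

lemma pat_one : Pat 0 1 := by
  intro t
  constructor
  · rintro ⟨ht, -⟩
    interval_cases t
    simp
  · intro h
    have : t ≠ 0 := by omega
    simp [coeff_one, this]

lemma pat_X_mul {D : ℕ} {g : ℝ[X]} (h : Pat D g) : Pat (D+1) (X * g) := by
  intro t
  rcases Nat.eq_zero_or_pos t with rfl | ht
  · have h0 : (X * g).coeff 0 = 0 := by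
      simp [Polynomial.coeff_X_mul_zero, Polynomial.mul_coeff_zero]
    exact ⟨fun _ => by rw [h0]; simp, fun _ => h0⟩
  · obtain ⟨s, rfl⟩ := Nat.exists_eq_add_of_le ht
    rw [add_comm 1 s]
    constructor
    · rintro ⟨h1, h2⟩
      rw [Polynomial.coeff_X_mul]
      have : (D + 1 - (s + 1))/2 = (D - s)/2 := by omega
      rw [this]
      exact (h s).1 ⟨by omega, by omega⟩
    · intro hh
      rw [Polynomial.coeff_X_mul]
      exact (h s).2 (by omega)

lemma pat_sq_mul {D : ℕ} {g : ℝ[X]} (a : ℝ) (h : Pat D g) :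
    Pat (D+2) ((X^2 - C (a^2)) * g) := by
  have hc : ∀ t : ℕ, ((X^2 - C (a^2)) * g).coeff t
      = (if 2 ≤ t then g.coeff (t - 2) else 0) - a^2 * g.coeff t := by
    intro t
    rw [sub_mul, Polynomial.coeff_sub, mul_comm (X^2 : ℝ[X]) g,
      Polynomial.coeff_mul_X_pow', Polynomial.coeff_C_mul]
  intro t
  constructor
  · rintro ⟨h1, h2⟩
    rw [hc]
    rcases le_or_gt 2 t with h2t | h2t
    · rw [if_pos h2t]
      rcases le_or_gt t D with htD | htD
      · have e1 : (D + 2 - t)/2 = (D - (t-2))/2 := by omega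
        have e2 : (D - (t-2))/2 = (D - t)/2 + 1 := by omega
        have p1 := (h (t-2)).1 ⟨by omega, by omega⟩
        have p2 := (h t).1 ⟨htD, by omega⟩
        rw [e1, mul_sub]
        have : (-1:ℝ)^((D - (t-2))/2) * (a^2 * g.coeff t)
            = -(a^2 * ((-1:ℝ)^((D-t)/2) * g.coeff t)) := by
          rw [e2, pow_succ]; ring
        rw [this]
        have : 0 ≤ a^2 * ((-1:ℝ)^((D-t)/2) * g.coeff t) :=
          mul_nonneg (sq_nonneg a) p2
        nlinarith [p1]
      · -- t = D+2 (t=D+1 excluded by parity)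
        have htD2 : t = D + 2 := by omega
        subst htD2
        have p1 := (h D).1 ⟨le_rfl, rfl⟩
        have p2 := (h (D+2)).2 (by omega)
        simp only [Nat.add_sub_cancel, Nat.sub_self, Nat.zero_div, pow_zero, one_mul] at *
        rw [p2]
        simpa using p1
    · rw [if_neg (by omega)]
      -- t < 2, parity matches D+2 so parity t = parity D; t ≤ D since D+2-t even... t ≤ D+2, t<2
      have htD : t ≤ D := by omega
      have p2 := (h t).1 ⟨htD, by omega⟩
      have e2 : (D + 2 - t)/2 = (D - t)/2 + 1 := by omega
      rw [e2, pow_succ]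
      have : (-1:ℝ)^((D-t)/2) * -1 * (0 - a^2 * g.coeff t)
          = a^2 * ((-1:ℝ)^((D-t)/2) * g.coeff t) := by ring
      rw [this]
      exact mul_nonneg (sq_nonneg a) p2
  · intro hh
    rw [hc]
    have z1 : g.coeff t = 0 := (h t).2 (by omega)
    rcases le_or_gt 2 t with h2t | h2t
    · have z2 : g.coeff (t-2) = 0 := (h (t-2)).2 (by omega)
      rw [if_pos h2t, z1, z2]; ring
    · rw [if_neg (by omega), z1]; ring

lemma pat_symm : ∀ (n : ℕ) (M : Multiset ℝ), Multiset.card M = n →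
    M.map (fun a => -a) = M → Pat n ((M.map (fun a => X - C a)).prod) := by
  intro n
  induction n using Nat.strong_induction_on with
  | _ n ih =>
    intro M hcard hsym
    rcases eq_or_ne M 0 with rfl | hne
    · simp only [Multiset.map_zero, Multiset.prod_zero]
      have : n = 0 := by simpa using hcard.symm
      subst this; exact pat_one
    obtain ⟨a, ha⟩ := Multiset.exists_mem_of_ne_zero hne
    rcases eq_or_ne a 0 with rfl | haz
    · -- remove a zero
      set M' := M.erase 0 with hM'
      have hM : M = (0:ℝ) ::ₘ M' := (Multiset.cons_erase ha).symm
      have hsym' : M'.map (fun a => -a) = M' := by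
        have := congrArg (fun s => Multiset.erase s (0:ℝ)) hsym
        simpa [hM', Multiset.map_erase _ neg_injective, neg_zero] using this
      have hcard' : Multiset.card M' + 1 = n := by
        rw [hM] at hcard; simpa using hcard
      have hpat := ih (Multiset.card M') (by omega) M' rfl hsym'
      have : (M.map (fun a => X - C a)).prod
          = X * (M'.map (fun a => X - C a)).prod := by
        rw [hM, Multiset.map_cons, Multiset.prod_cons]; simp
      rw [this, ← hcard']
      exact pat_X_mul hpat
    · -- pair a with -a
      have hna : -a ∈ M := by
        rw [← hsym]; exact Multiset.mem_map_of_mem _ ha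
      have hna' : -a ∈ M.erase a := by
        have hne2 : (-a) ≠ a := fun h => haz (by linarith)
        rw [Multiset.mem_erase_of_ne hne2]
        exact hna
      set M'' := (M.erase a).erase (-a) with hM''
      have hM : M = a ::ₘ (-a) ::ₘ M'' := by
        rw [hM'', Multiset.cons_erase hna', Multiset.cons_erase ha]
      have hsym'' : M''.map (fun a => -a) = M'' := by
        have h1 := congrArg (fun s => Multiset.erase (Multiset.erase s (-a)) a) hsym
        simpa [hM'', Multiset.map_erase _ neg_injective, neg_neg,
          Multiset.erase_comm] using h1
      have hcard'' : Multiset.card M'' + 2 = n := by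
        rw [hM] at hcard; simpa using hcard
      have hpat := ih (Multiset.card M'') (by omega) M'' rfl hsym''
      have hprod : (M.map (fun a => X - C a)).prod
          = (X^2 - C (a^2)) * (M''.map (fun a => X - C a)).prod := by
        rw [hM, Multiset.map_cons, Multiset.map_cons, Multiset.prod_cons,
          Multiset.prod_cons, ← mul_assoc]
        congr 1
        simp only [map_neg, map_pow]
        ring
      rw [hprod, ← hcard'']
      exact pat_sq_mul a hpat



noncomputable def vnode (m : ℕ) : Fin (m+1) → ℝ := fun k => Real.cos (k * π / m)

lemma vnode_strictAnti {m : ℕ} (hm : 1 ≤ m) : StrictAnti (vnode m) := by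
  intro k l hkl
  have hm' : (0:ℝ) < m := by exact_mod_cast hm
  have hl : (l:ℝ) ≤ m := by exact_mod_cast Nat.lt_succ_iff.mp l.isLt
  apply Real.cos_lt_cos_of_nonneg_of_le_pi
  · positivity
  · rw [div_le_iff₀ hm']
    nlinarith [Real.pi_pos]
  · have : (k:ℝ) < l := by exact_mod_cast hkl
    have := Real.pi_pos
    apply div_lt_div_of_pos_right ?_ hm'
    nlinarith

lemma vnode_inj {m : ℕ} (hm : 1 ≤ m) : Function.Injective (vnode m) :=
  (vnode_strictAnti hm).injective

lemma vnode_rev {m : ℕ} (hm : 1 ≤ m) (k : Fin (m+1)) :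
    vnode m k.rev = -vnode m k := by
  have hm' : (m:ℝ) ≠ 0 := by positivity
  have hrev : ((k.rev : ℕ) : ℝ) = (m : ℝ) - (k : ℕ) := by
    have h1 : (k.rev : ℕ) = m - (k:ℕ) := by
      rw [Fin.val_rev]; omega
    rw [h1, Nat.cast_sub (Nat.lt_succ_iff.mp k.isLt)]
  unfold vnode
  rw [hrev, ← Real.cos_pi_sub]
  congr 1
  field_simp

lemma abs_vnode_le {m : ℕ} (k : Fin (m+1)) : |vnode m k| ≤ 1 := Real.abs_cos_le_one _

lemma T_eval_vnode {m : ℕ} (hm : 1 ≤ m) (k : Fin (m+1)) :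
    (Polynomial.Chebyshev.T ℝ (m:ℤ)).eval (vnode m k) = (-1:ℝ)^(k:ℕ) := by
  have hm' : (m:ℝ) ≠ 0 := by positivity
  unfold vnode
  rw [Polynomial.Chebyshev.T_real_cos]
  have h1 : ((m:ℤ):ℝ) * ((k:ℕ) * π / m) = (k:ℕ) * π := by
    push_cast; field_simp
  rw [h1]
  have := Real.cos_int_mul_pi_sub 0 (k:ℕ)
  simp only [sub_zero, Real.cos_zero, mul_one] at this
  rw [show (((k:ℕ):ℤ):ℝ) * π = ((k:ℕ):ℝ) * π by push_cast; ring] at this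
  rw [this]
  norm_cast



lemma Mfull_symm {m : ℕ} (hm : 1 ≤ m) :
    ((univ : Finset (Fin (m+1))).val.map (vnode m)).map (fun a => -a)
      = (univ : Finset (Fin (m+1))).val.map (vnode m) := by
  rw [Multiset.map_map]
  have h1 : (univ : Finset (Fin (m+1))).val.map ((fun a => -a) ∘ vnode m)
      = (univ : Finset (Fin (m+1))).val.map (vnode m ∘ Fin.rev) := by
    apply Multiset.map_congr rfl
    intro k _
    simp [Function.comp, vnode_rev hm k]
  rw [h1, ← Multiset.map_map]
  congr 1
  have h2 := Finset.map_univ_equiv (Fin.revPerm (n := m+1))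
  calc (univ : Finset (Fin (m+1))).val.map Fin.rev
      = ((univ : Finset (Fin (m+1))).map Fin.revPerm.toEmbedding).val := by
        rw [Finset.map_val]; rfl
    _ = (univ : Finset (Fin (m+1))).val := by rw [h2]

section SignN
variable {m : ℕ}

lemma signN {m ℓ : ℕ} (hm : 1 ≤ m) (hℓ : ℓ % 2 = m % 2) (k : Fin (m+1)) :
    0 ≤ (-1:ℝ)^((m-ℓ)/2) *
      (∏ j ∈ (univ : Finset (Fin (m+1))).erase k, (X - C (vnode m j))).coeff ℓ := by
  set v := vnode m with hv
  have hinj : Function.Injective v := vnode_inj hm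
  set Mk := ((univ : Finset (Fin (m+1))).erase k).val.map v with hMkdef
  have hprodm : (∏ j ∈ (univ : Finset (Fin (m+1))).erase k, (X - C (v j)))
      = (Mk.map (fun a => X - C a)).prod := by
    rw [Finset.prod_eq_multiset_prod, hMkdef, Multiset.map_map]
    rfl
  have hMk : Mk = ((univ : Finset (Fin (m+1))).val.map v).erase (v k) := by
    rw [hMkdef, Finset.erase_val, Multiset.map_erase _ hinj]
  have hcardMk : Multiset.card Mk = m := by
    simp [hMkdef, Finset.card_erase_of_mem]
  by_cases hkk : k.rev = k
  · -- middle node, v k = 0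
    have hvk0 : v k = 0 := by
      have := vnode_rev hm k
      rw [hkk] at this
      linarith [this]
    have hsym : Mk.map (fun a => -a) = Mk := by
      rw [hMk, Multiset.map_erase _ neg_injective, Mfull_symm hm, hvk0, neg_zero]
    have hpat := pat_symm m Mk hcardMk hsym
    rw [hprodm]
    rcases le_or_gt ℓ m with hlm | hlm
    · exact (hpat ℓ).1 ⟨hlm, hℓ⟩
    · rw [(hpat ℓ).2 (by omega), mul_zero]
  · -- paired node
    have hrevmem : k.rev ∈ (univ : Finset (Fin (m+1))).erase k :=
      Finset.mem_erase.mpr ⟨hkk, Finset.mem_univ _⟩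
    have hvrev : v k.rev ∈ Mk := by
      rw [hMkdef]
      exact Multiset.mem_map_of_mem v (Finset.mem_val.mpr hrevmem)
    set M2 := Mk.erase (v k.rev) with hM2def
    have hsplit : Mk = v k.rev ::ₘ M2 := (Multiset.cons_erase hvrev).symm
    have hM2card : Multiset.card M2 + 1 = m := by
      have := congrArg Multiset.card hsplit
      rw [Multiset.card_cons] at this
      omega
    have hrv : v k.rev = - v k := vnode_rev hm k
    have hrv2 : v k = - v k.rev := by rw [hrv]; ring
    have hM2sym : M2.map (fun a => -a) = M2 := by
      rw [hM2def, hMk, Multiset.map_erase _ neg_injective,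
        Multiset.map_erase _ neg_injective, Mfull_symm hm, ← hrv, ← hrv2,
        Multiset.erase_comm]
    have hpat := pat_symm (m-1) M2 (by omega) hM2sym
    set g := (M2.map (fun a => X - C a)).prod with hgdef
    have hNg : (Mk.map (fun a => X - C a)).prod = (X - C (v k.rev)) * g := by
      rw [hsplit, Multiset.map_cons, Multiset.prod_cons]
    have hcoe : ∀ t : ℕ, ((X - C (v k.rev)) * g).coeff t
        = (if 1 ≤ t then g.coeff (t - 1) else 0) - v k.rev * g.coeff t := by
      intro t
      rw [sub_mul, Polynomial.coeff_sub, mul_comm (X : ℝ[X]) g,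
        ← pow_one (X : ℝ[X]), Polynomial.coeff_mul_X_pow', Polynomial.coeff_C_mul]
    have hgl : g.coeff ℓ = 0 := (hpat ℓ).2 (by omega)
    rw [hprodm, hNg, hcoe, hgl, mul_zero, sub_zero]
    rcases Nat.eq_zero_or_pos ℓ with rfl | hl1
    · rw [if_neg (by omega)]
      simp
    · rw [if_pos (by omega : 1 ≤ ℓ)]
      rcases le_or_gt ℓ m with hlm | hlm
      · have := (hpat (ℓ-1)).1 ⟨by omega, by omega⟩
        have he : (m - 1 - (ℓ - 1))/2 = (m - ℓ)/2 := by omega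
        rwa [he] at this
      · rw [(hpat (ℓ-1)).2 (by omega), mul_zero]

lemma sign_denom {m : ℕ} (hm : 1 ≤ m) (k : Fin (m+1)) :
    0 < (-1:ℝ)^(k:ℕ) *
      ∏ j ∈ (univ : Finset (Fin (m+1))).erase k, (vnode m k - vnode m j) := by
  set v := vnode m with hv
  have hanti := vnode_strictAnti hm
  rw [← Finset.prod_filter_mul_prod_filter_not
    ((univ : Finset (Fin (m+1))).erase k) (fun j => j < k)]
  have hA : ((univ : Finset (Fin (m+1))).erase k).filter (fun j => j < k)
      = Finset.Iio k := by
    ext j; simp only [Finset.mem_filter, Finset.mem_erase, Finset.mem_univ,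
      Finset.mem_Iio, true_and, and_iff_right_iff_imp]
    exact fun h => ⟨ne_of_lt h, trivial⟩
  have hcardA : (((univ : Finset (Fin (m+1))).erase k).filter (fun j => j < k)).card
      = (k:ℕ) := by rw [hA, Fin.card_Iio]
  have h1 : ∏ j ∈ ((univ : Finset (Fin (m+1))).erase k).filter (fun j => j < k),
      (v k - v j) = (-1:ℝ)^(k:ℕ) *
      ∏ j ∈ ((univ : Finset (Fin (m+1))).erase k).filter (fun j => j < k),
        (v j - v k) := by
    rw [← hcardA, ← Finset.prod_const (-1:ℝ), ← Finset.prod_mul_distrib]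
    apply Finset.prod_congr rfl
    intro j _; ring
  rw [h1]
  have hpos1 : 0 < ∏ j ∈ ((univ : Finset (Fin (m+1))).erase k).filter (fun j => j < k),
      (v j - v k) := by
    apply Finset.prod_pos
    intro j hj
    rw [hA, Finset.mem_Iio] at hj
    have := hanti hj
    simp only [sub_pos]
    exact this
  have hpos2 : 0 < ∏ j ∈ ((univ : Finset (Fin (m+1))).erase k).filter (fun j => ¬ j < k),
      (v k - v j) := by
    apply Finset.prod_pos
    intro j hj
    rw [Finset.mem_filter, Finset.mem_erase] at hj
    obtain ⟨⟨hne, -⟩, hnlt⟩ := hj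
    have hkj : k < j := lt_of_le_of_ne (not_lt.mp hnlt) (Ne.symm hne)
    have := hanti hkj
    simp only [sub_pos]
    exact this
  have hsq : (-1:ℝ)^(k:ℕ) * ((-1:ℝ)^(k:ℕ) *
      (∏ j ∈ ((univ : Finset (Fin (m+1))).erase k).filter (fun j => j < k), (v j - v k)) *
      ∏ j ∈ ((univ : Finset (Fin (m+1))).erase k).filter (fun j => ¬ j < k), (v k - v j))
      = (∏ j ∈ ((univ : Finset (Fin (m+1))).erase k).filter (fun j => j < k), (v j - v k)) *
      ∏ j ∈ ((univ : Finset (Fin (m+1))).erase k).filter (fun j => ¬ j < k), (v k - v j) := by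
    have : (-1:ℝ)^(k:ℕ) * (-1:ℝ)^(k:ℕ) = 1 := by
      rw [← pow_add]
      exact Even.neg_one_pow ⟨(k:ℕ), rfl⟩
    linear_combination ((∏ j ∈ ((univ : Finset (Fin (m+1))).erase k).filter (fun j => j < k), (v j - v k)) *
      ∏ j ∈ ((univ : Finset (Fin (m+1))).erase k).filter (fun j => ¬ j < k), (v k - v j)) * this
  rw [hsq]
  exact mul_pos hpos1 hpos2

end SignN

lemma chebT_natDegree_le : ∀ m : ℕ, (Polynomial.Chebyshev.T ℝ (m:ℤ)).natDegree ≤ m := by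
  intro m
  induction m using Nat.strong_induction_on with
  | _ m ih =>
    match m with
    | 0 => simp [Polynomial.Chebyshev.T_zero]
    | 1 => simp [Polynomial.Chebyshev.T_one]
    | (m+2) =>
      have hcast : ((m+2:ℕ):ℤ) = (m:ℤ) + 2 := by push_cast; ring
      rw [hcast, Polynomial.Chebyshev.T_add_two]
      refine le_trans (Polynomial.natDegree_sub_le _ _) ?_
      have h1 : (2 * X * Polynomial.Chebyshev.T ℝ ((m:ℤ)+1)).natDegree ≤ m + 2 := by
        refine le_trans (Polynomial.natDegree_mul_le) ?_
        have h2 : (2 * X : ℝ[X]).natDegree ≤ 1 := by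
          refine le_trans (Polynomial.natDegree_mul_le) ?_
          simp
        have h3 : (Polynomial.Chebyshev.T ℝ ((m:ℤ)+1)).natDegree ≤ m + 1 := by
          have := ih (m+1) (by omega)
          rwa [show ((m+1:ℕ):ℤ) = (m:ℤ)+1 by push_cast; ring] at this
        omega
      have h4 : (Polynomial.Chebyshev.T ℝ (m:ℤ)).natDegree ≤ m := ih m (by omega)
      exact max_le h1 (by omega)

lemma basis_coeff {m : ℕ} (k : Fin (m+1)) (ℓ : ℕ) :
    (Lagrange.basis univ (vnode m) k).coeff ℓ =
      (∏ j ∈ (univ : Finset (Fin (m+1))).erase k, (vnode m k - vnode m j))⁻¹ *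
      (∏ j ∈ (univ : Finset (Fin (m+1))).erase k, (X - C (vnode m j))).coeff ℓ := by
  have hbasis : Lagrange.basis univ (vnode m) k
      = C (∏ j ∈ (univ : Finset (Fin (m+1))).erase k, (vnode m k - vnode m j))⁻¹ *
        ∏ j ∈ (univ : Finset (Fin (m+1))).erase k, (X - C (vnode m j)) := by
    rw [Lagrange.basis]
    simp only [Lagrange.basisDivisor]
    rw [Finset.prod_mul_distrib]
    congr 1
    rw [← Finset.prod_inv_distrib, ← map_prod]
  rw [hbasis, Polynomial.coeff_C_mul]

lemma cheb_coeff_bound {m ℓ : ℕ} (hpar : ℓ % 2 = m % 2) (q : ℝ[X])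
    (hdeg : q.degree < ((m + 1 : ℕ) : WithBot ℕ))
    (hb : ∀ t : ℝ, |t| ≤ 1 → |q.eval t| ≤ 1) :
    |q.coeff ℓ| ≤ |(Polynomial.Chebyshev.T ℝ (m : ℤ)).coeff ℓ| := by
  rcases Nat.eq_zero_or_pos m with rfl | hm
  · have hdle : q.degree ≤ 0 := by
      rcases h : q.degree with _ | n
      · exact bot_le
      · rw [h] at hdeg
        have h2 : (n : WithBot ℕ) < ((0 + 1 : ℕ) : WithBot ℕ) := hdeg
        have h3 : n = 0 := by
          norm_cast at h2
          omega
        rw [h3]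
        exact le_rfl
    have hq : q = C (q.coeff 0) := Polynomial.eq_C_of_degree_le_zero hdle
    rcases Nat.eq_zero_or_pos ℓ with rfl | hl
    · have h1 := hb 1 (by norm_num)
      rw [hq] at h1
      simp only [Polynomial.eval_C] at h1
      simpa [Polynomial.Chebyshev.T_zero] using h1
    · have hz : q.coeff ℓ = 0 := by
        apply Polynomial.coeff_eq_zero_of_degree_lt
        refine lt_of_lt_of_le hdeg ?_
        exact_mod_cast Nat.one_le_iff_ne_zero.mpr (by omega)
      rw [hz]
      simp
  · set v := vnode m with hv
    have hinj : Function.Injective v := vnode_inj hm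
    have hinjOn : Set.InjOn v ↑(univ : Finset (Fin (m+1))) := hinj.injOn
    have hcard : (univ : Finset (Fin (m+1))).card = m + 1 := by simp
    have hdeg' : q.degree < ((univ : Finset (Fin (m+1))).card : WithBot ℕ) := by
      rw [hcard]; exact_mod_cast hdeg
    set w : Fin (m+1) → ℝ := fun k => (Lagrange.basis univ v k).coeff ℓ with hw
    have hcoeff : ∀ (p : ℝ[X]), p.degree < ((univ : Finset (Fin (m+1))).card : WithBot ℕ) →
        p.coeff ℓ = ∑ k : Fin (m+1), p.eval (v k) * w k := by
      intro p hp
      conv_lhs => rw [Lagrange.eq_interpolate hinjOn hp]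
      rw [Lagrange.interpolate_apply, Polynomial.finset_sum_coeff]
      exact Finset.sum_congr rfl fun k _ => by
        rw [Polynomial.coeff_C_mul]
    set ε : ℝ := (-1)^((m-ℓ)/2) with hε
    have hsign : ∀ k : Fin (m+1), 0 ≤ ε * ((-1)^(k:ℕ) * w k) := by
      intro k
      have h1 := sign_denom hm k
      have h2 := signN hm hpar k
      have h1' : 0 < (-1:ℝ)^(k:ℕ) *
          (∏ j ∈ (univ : Finset (Fin (m+1))).erase k, (v k - v j))⁻¹ := by
        have := inv_pos.mpr h1
        rwa [mul_inv, ← inv_pow, inv_neg, inv_one] at this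
      have hrw : ε * ((-1:ℝ)^(k:ℕ) * w k)
          = ((-1:ℝ)^(k:ℕ) *
              (∏ j ∈ (univ : Finset (Fin (m+1))).erase k, (v k - v j))⁻¹) *
            (ε * (∏ j ∈ (univ : Finset (Fin (m+1))).erase k, (X - C (v j))).coeff ℓ) := by
        rw [hw]; dsimp only
        rw [basis_coeff k ℓ]
        ring
      rw [hrw]
      exact mul_nonneg h1'.le h2
    have habsw : ∀ k : Fin (m+1), |w k| = ε * ((-1)^(k:ℕ) * w k) := by
      intro k
      have h := hsign k
      have habs : |ε * ((-1:ℝ)^(k:ℕ) * w k)| = |w k| := by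
        rw [abs_mul, abs_mul, hε, abs_pow, abs_pow, abs_neg, abs_one, one_pow,
          one_pow, one_mul, one_mul]
      rw [← habs, abs_of_nonneg h]
    have hTdeg : (Polynomial.Chebyshev.T ℝ (m:ℤ)).degree
        < ((univ : Finset (Fin (m+1))).card : WithBot ℕ) := by
      rw [hcard]
      refine lt_of_le_of_lt (Polynomial.degree_le_of_natDegree_le (chebT_natDegree_le m)) ?_
      exact_mod_cast Nat.lt_succ_self m
    have hTcoeff : (Polynomial.Chebyshev.T ℝ (m:ℤ)).coeff ℓ
        = ∑ k : Fin (m+1), (-1:ℝ)^(k:ℕ) * w k := by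
      rw [hcoeff _ hTdeg]
      exact Finset.sum_congr rfl fun k _ => by rw [T_eval_vnode hm k]
    calc |q.coeff ℓ| = |∑ k : Fin (m+1), q.eval (v k) * w k| := by rw [hcoeff q hdeg']
      _ ≤ ∑ k : Fin (m+1), |q.eval (v k) * w k| := Finset.abs_sum_le_sum_abs _ _
      _ ≤ ∑ k : Fin (m+1), |w k| := by
          apply Finset.sum_le_sum
          intro k _
          rw [abs_mul]
          have h1 := hb (v k) (abs_vnode_le k)
          nlinarith [abs_nonneg (w k), abs_nonneg (q.eval (v k))]
      _ = ∑ k : Fin (m+1), ε * ((-1:ℝ)^(k:ℕ) * w k) :=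
          Finset.sum_congr rfl fun k _ => habsw k
      _ = ε * ∑ k : Fin (m+1), (-1:ℝ)^(k:ℕ) * w k := by rw [Finset.mul_sum]
      _ = ε * (Polynomial.Chebyshev.T ℝ (m:ℤ)).coeff ℓ := by rw [hTcoeff]
      _ ≤ |(Polynomial.Chebyshev.T ℝ (m:ℤ)).coeff ℓ| := by
          have habs : |ε * (Polynomial.Chebyshev.T ℝ (m:ℤ)).coeff ℓ|
              = |(Polynomial.Chebyshev.T ℝ (m:ℤ)).coeff ℓ| := by
            rw [abs_mul, hε, abs_pow, abs_neg, abs_one, one_pow, one_mul]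
          rw [← habs]
          exact le_abs_self _


lemma sgn_abs (b : Bool) : |sgn b| = 1 := by cases b <;> simp [sgn]

lemma homPart_eq_zero {n d : ℕ} {f : (Fin n → Bool) → ℝ}
    (hdeg : ∀ S : Finset (Fin n), d < S.card → fcoeff f S = 0) {ℓ : ℕ} (hdl : d < ℓ)
    (x : Fin n → Bool) : homPart f ℓ x = 0 := by
  apply Finset.sum_eq_zero
  intro S hS
  rw [Finset.mem_filter] at hS
  rw [hdeg S (by omega), zero_mul]

lemma homPart_eq_zero' {n ℓ : ℕ} (f : (Fin n → Bool) → ℝ) (hnl : n < ℓ)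
    (x : Fin n → Bool) : homPart f ℓ x = 0 := by
  apply Finset.sum_eq_zero
  intro S hS
  rw [Finset.mem_filter] at hS
  have := Finset.card_le_univ S
  simp only [Finset.card_univ, Fintype.card_fin] at this
  omega

lemma cube_poly_bound {n d : ℕ} (f : (Fin n → Bool) → ℝ) (hbdd : ∀ x, |f x| ≤ 1)
    (hdeg : ∀ S : Finset (Fin n), d < S.card → fcoeff f S = 0) (x : Fin n → Bool)
    (t : ℝ) (ht : |t| ≤ 1) :
    |∑ k ∈ Finset.range (d+1), homPart f k x * t^k| ≤ 1 := by
  set g : Fin n → Bool → ℝ := fun i b => (1 + t * sgn (x i) * sgn b)/2 with hg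
  set P : (Fin n → Bool) → ℝ := fun y => ∏ i : Fin n, g i (y i) with hP
  have hfac : ∀ (y : Fin n → Bool) (i : Fin n), 0 ≤ g i (y i) := by
    intro y i
    rw [hg]
    dsimp only
    have h1 : |t * sgn (x i) * sgn (y i)| ≤ 1 := by
      rw [abs_mul, abs_mul, sgn_abs, sgn_abs, mul_one, mul_one]; exact ht
    have := abs_le.mp h1
    linarith
  have hPnn : ∀ y, 0 ≤ P y := fun y => Finset.prod_nonneg (fun i _ => hfac y i)
  have hPsum : ∑ y : Fin n → Bool, P y = 1 := by
    rw [hP]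
    calc ∑ y : Fin n → Bool, ∏ i : Fin n, g i (y i)
        = ∑ y ∈ Fintype.piFinset (fun _ : Fin n => (Finset.univ : Finset Bool)),
            ∏ i : Fin n, g i (y i) := by
          rw [Fintype.piFinset_univ]
      _ = ∏ i : Fin n, ∑ b : Bool, g i b :=
          (Finset.prod_univ_sum _ g).symm
      _ = ∏ i : Fin n, (1:ℝ) := by
          apply Finset.prod_congr rfl
          intro i _
          rw [Fintype.sum_bool, hg]
          dsimp only
          simp only [sgn]
          norm_num
          split <;> ring
      _ = 1 := Finset.prod_const_one
  have hkey : ∑ k ∈ Finset.range (d+1), homPart f k x * t^k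
      = ∑ y : Fin n → Bool, f y * P y := by
    have h1 : ∑ k ∈ Finset.range (d+1), homPart f k x * t^k
        = ∑ S : Finset (Fin n), fcoeff f S * chi S x * t^(S.card) := by
      have hmap : ∀ S : Finset (Fin n), S ∈ (Finset.univ : Finset (Finset (Fin n))) →
          S.card ∈ Finset.range (n+1) := by
        intro S _
        have := Finset.card_le_univ S
        simp only [Finset.card_univ, Fintype.card_fin] at this
        exact Finset.mem_range.mpr (by omega)
      rw [← Finset.sum_fiberwise_of_maps_to hmap
        (fun S => fcoeff f S * chi S x * t^(S.card))]
      have hin : ∀ k : ℕ, ∑ S ∈ Finset.univ.filter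
            (fun S : Finset (Fin n) => S.card = k), fcoeff f S * chi S x * t^(S.card)
          = homPart f k x * t^k := by
        intro k
        rw [homPart, Finset.sum_mul]
        apply Finset.sum_congr rfl
        intro S hS
        rw [Finset.mem_filter] at hS
        rw [hS.2]
      have e1 : ∑ k ∈ Finset.range (d+1), homPart f k x * t^k
          = ∑ k ∈ Finset.range (n+d+2), homPart f k x * t^k := by
        apply Finset.sum_subset
        · apply Finset.range_subset_range.mpr; omega
        · intro k _ hk
          rw [Finset.mem_range, not_lt] at hk
          rw [homPart_eq_zero hdeg (by omega) x, zero_mul]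
      have e2 : ∑ k ∈ Finset.range (n+1),
            (∑ S ∈ Finset.univ.filter (fun S : Finset (Fin n) => S.card = k),
              fcoeff f S * chi S x * t^(S.card))
          = ∑ k ∈ Finset.range (n+d+2),
            (∑ S ∈ Finset.univ.filter (fun S : Finset (Fin n) => S.card = k),
              fcoeff f S * chi S x * t^(S.card)) := by
        apply Finset.sum_subset
        · apply Finset.range_subset_range.mpr; omega
        · intro k _ hk
          rw [Finset.mem_range, not_lt] at hk
          rw [hin k, homPart_eq_zero' f (by omega) x, zero_mul]
      rw [e1, e2]
      apply Finset.sum_congr rfl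
      intro k _
      rw [hin k]
    rw [h1]
    have h2 : ∀ S : Finset (Fin n), fcoeff f S * chi S x * t^(S.card)
        = ∑ y : Fin n → Bool, f y * (chi S y * chi S x * t^(S.card)) / 2^n := by
      intro S
      rw [fcoeff, div_mul_eq_mul_div, div_mul_eq_mul_div, Finset.sum_mul,
        Finset.sum_mul, Finset.sum_div]
      apply Finset.sum_congr rfl
      intro y _
      ring
    rw [Finset.sum_congr rfl (fun S _ => h2 S), Finset.sum_comm]
    apply Finset.sum_congr rfl
    intro y _
    have h3 : ∀ S : Finset (Fin n), chi S y * chi S x * t^(S.card)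
        = ∏ i ∈ S, (t * sgn (x i) * sgn (y i)) := by
      intro S
      rw [chi, chi, ← Finset.prod_const t, ← Finset.prod_mul_distrib,
        ← Finset.prod_mul_distrib]
      apply Finset.prod_congr rfl
      intro i _
      ring
    have h4 : ∑ S : Finset (Fin n), ∏ i ∈ S, (t * sgn (x i) * sgn (y i))
        = ∏ i : Fin n, (1 + t * sgn (x i) * sgn (y i)) := by
      have hadd := Finset.prod_add (fun i : Fin n => t * sgn (x i) * sgn (y i))
        (fun _ => (1:ℝ)) Finset.univ
      rw [Finset.powerset_univ] at hadd
      calc ∑ S : Finset (Fin n), ∏ i ∈ S, (t * sgn (x i) * sgn (y i))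
          = ∑ S : Finset (Fin n), (∏ i ∈ S, (t * sgn (x i) * sgn (y i)))
              * ∏ i ∈ Finset.univ \ S, (1:ℝ) := by
            apply Finset.sum_congr rfl
            intro S _
            rw [Finset.prod_const_one, mul_one]
        _ = ∏ i : Fin n, (t * sgn (x i) * sgn (y i) + 1) := hadd.symm
        _ = ∏ i : Fin n, (1 + t * sgn (x i) * sgn (y i)) := by
            apply Finset.prod_congr rfl
            intro i _
            ring
    calc ∑ S : Finset (Fin n), f y * (chi S y * chi S x * t^(S.card)) / 2^n
        = f y * (∑ S : Finset (Fin n), chi S y * chi S x * t^(S.card)) / 2^n := by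
          rw [Finset.mul_sum, Finset.sum_div]
      _ = f y * (∏ i : Fin n, (1 + t * sgn (x i) * sgn (y i))) / 2^n := by
          rw [Finset.sum_congr rfl (fun S _ => h3 S), h4]
      _ = f y * P y := by
          rw [hP, hg]
          dsimp only
          rw [Finset.prod_div_distrib, Finset.prod_const]
          simp only [Finset.card_univ, Fintype.card_fin]
          ring
  rw [hkey]
  calc |∑ y : Fin n → Bool, f y * P y| ≤ ∑ y : Fin n → Bool, |f y * P y| :=
        Finset.abs_sum_le_sum_abs _ _
    _ ≤ ∑ y : Fin n → Bool, P y := by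
        apply Finset.sum_le_sum
        intro y _
        rw [abs_mul, abs_of_nonneg (hPnn y)]
        nlinarith [hbdd y, hPnn y, abs_nonneg (f y)]
    _ = 1 := hPsum

lemma coeff_sum_CX {d : ℕ} (c : ℕ → ℝ) (j : ℕ) :
    ((∑ k ∈ Finset.range (d+1), C (c k) * X^k).coeff j) = if j ≤ d then c j else 0 := by
  rw [Polynomial.finset_sum_coeff]
  simp only [Polynomial.coeff_C_mul, Polynomial.coeff_X_pow]
  rcases le_or_gt j d with h | h
  · rw [if_pos h, Finset.sum_eq_single j]
    · rw [if_pos rfl, mul_one]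
    · intro k _ hk
      rw [if_neg (Ne.symm hk), mul_zero]
    · intro hj
      exact absurd (Finset.mem_range.mpr (by omega)) hj
  · rw [if_neg (by omega)]
    apply Finset.sum_eq_zero
    intro k hk
    rw [Finset.mem_range] at hk
    rw [if_neg (by omega), mul_zero]

lemma degree_sum_CX {d : ℕ} (c : ℕ → ℝ) :
    (∑ k ∈ Finset.range (d+1), C (c k) * X^k).degree < ((d+1 : ℕ) : WithBot ℕ) := by
  rw [Polynomial.degree_lt_iff_coeff_zero]
  intro j hj
  have hj' : d + 1 ≤ j := by exact_mod_cast hj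
  rw [coeff_sum_CX, if_neg (by omega)]

lemma eval_sum_CX {d : ℕ} (c : ℕ → ℝ) (t : ℝ) :
    (∑ k ∈ Finset.range (d+1), C (c k) * X^k).eval t
      = ∑ k ∈ Finset.range (d+1), c k * t^k := by
  rw [Polynomial.eval_finset_sum]
  apply Finset.sum_congr rfl
  intro k _
  simp

lemma neg_one_pow_par {a b : ℕ} (h : a % 2 = b % 2) : (-1:ℝ)^a = (-1)^b := by
  rcases Nat.even_or_odd a with ha | ha
  · have h0 : a % 2 = 0 := Nat.even_iff.mp ha
    rw [ha.neg_one_pow, (Nat.even_iff.mpr (by omega : b % 2 = 0)).neg_one_pow]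
  · have h0 : a % 2 = 1 := Nat.odd_iff.mp ha
    rw [ha.neg_one_pow, (Nat.odd_iff.mpr (by omega : b % 2 = 1)).neg_one_pow]


/-- If `f : {±1}^n → [-1,1]` has degree `d`, then `‖f_ℓ‖_∞ ≤ |C(d,ℓ)|` when
`d ≡ ℓ (mod 2)`, and `‖f_ℓ‖_∞ ≤ |C(d-1,ℓ)|` otherwise. -/
theorem stmt0 (n d ℓ : ℕ) (f : (Fin n → Bool) → ℝ)
    (hbdd : ∀ x, |f x| ≤ 1)
    (hdeg : ∀ S : Finset (Fin n), d < S.card → fcoeff f S = 0) :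
    ∀ x : Fin n → Bool,
      |homPart f ℓ x| ≤ if d % 2 = ℓ % 2 then |chebCoeff d ℓ| else |chebCoeff (d - 1) ℓ| := by
  intro x
  by_cases hdl : d < ℓ
  · rw [homPart_eq_zero hdeg hdl x, abs_zero]
    split <;> exact abs_nonneg _
  · have hld : ℓ ≤ d := by omega
    set c : ℕ → ℝ := fun k => homPart f k x with hc
    set q : ℝ[X] := ∑ k ∈ Finset.range (d+1), C (c k) * X^k with hq
    have hqb : ∀ t : ℝ, |t| ≤ 1 → |q.eval t| ≤ 1 := by
      intro t ht
      rw [hq, eval_sum_CX]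
      exact cube_poly_bound f hbdd hdeg x t ht
    have hqcoeff : q.coeff ℓ = homPart f ℓ x := by
      rw [hq, coeff_sum_CX, if_pos hld]
    by_cases hpar : d % 2 = ℓ % 2
    · rw [if_pos hpar]
      have := cheb_coeff_bound (m := d) (ℓ := ℓ) hpar.symm q
        (degree_sum_CX c) hqb
      rw [hqcoeff] at this
      exact this
    · rw [if_neg hpar]
      have hd1 : 1 ≤ d := by
        rcases Nat.eq_zero_or_pos d with rfl | h
        · omega
        · exact h
      set c' : ℕ → ℝ := fun k => if k % 2 = ℓ % 2 then c k else 0 with hc'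
      set q' : ℝ[X] := ∑ k ∈ Finset.range (d+1), C (c' k) * X^k with hq'
      have hq'coeff : q'.coeff ℓ = homPart f ℓ x := by
        rw [hq', coeff_sum_CX, if_pos hld, hc']
        simp
        rfl
      have hq'deg : q'.degree < (((d-1)+1 : ℕ) : WithBot ℕ) := by
        rw [Polynomial.degree_lt_iff_coeff_zero]
        intro j hj
        have hj' : (d-1) + 1 ≤ j := by exact_mod_cast hj
        rw [hq', coeff_sum_CX]
        rcases le_or_gt j d with h | h
        · have hjd : j = d := by omega
          rw [if_pos h, hc']
          dsimp only
          rw [if_neg (show ¬(j % 2 = ℓ % 2) by omega)]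
        · rw [if_neg (by omega)]
      have hq'eval : ∀ t : ℝ, q'.eval t = (q.eval t + (-1)^ℓ * q.eval (-t))/2 := by
        intro t
        rw [hq', hq, eval_sum_CX, eval_sum_CX, eval_sum_CX, Finset.mul_sum,
          ← Finset.sum_add_distrib, Finset.sum_div]
        apply Finset.sum_congr rfl
        intro k _
        rw [hc']
        dsimp only
        have hnt : (-t)^k = (-1:ℝ)^k * t^k := by
          rw [neg_pow]
        by_cases hk : k % 2 = ℓ % 2
        · rw [if_pos hk, hnt, neg_one_pow_par hk.symm]
          have : (-1:ℝ)^k * (-1)^k = 1 := by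
            rw [← pow_add]
            exact Even.neg_one_pow ⟨k, by omega⟩
          linear_combination (-(c k * t^k) / 2) * this
        · rw [if_neg hk]
          have hpar2 : (-1:ℝ)^ℓ = -(-1:ℝ)^k := by
            have h1 : ℓ % 2 = (k+1) % 2 := by omega
            rw [neg_one_pow_par h1, pow_succ]
            ring
          rw [hnt, hpar2]
          have : (-1:ℝ)^k * (-1)^k = 1 := by
            rw [← pow_add]
            exact Even.neg_one_pow ⟨k, by omega⟩
          linear_combination (c k * t^k / 2) * this
      have hq'b : ∀ t : ℝ, |t| ≤ 1 → |q'.eval t| ≤ 1 := by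
        intro t ht
        rw [hq'eval]
        have h1 := hqb t ht
        have h2 := hqb (-t) (by rwa [abs_neg])
        have h3 : |(-1:ℝ)^ℓ * q.eval (-t)| = |q.eval (-t)| := by
          rw [abs_mul, abs_pow, abs_neg, abs_one, one_pow, one_mul]
        calc |(q.eval t + (-1)^ℓ * q.eval (-t))/2|
            ≤ (|q.eval t| + |(-1:ℝ)^ℓ * q.eval (-t)|)/2 := by
              rw [abs_div, abs_two]
              apply div_le_div_of_nonneg_right (abs_add_le _ _) ?_ |>.trans_eq rfl
              norm_num
          _ ≤ 1 := by rw [h3]; linarith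
      have hpar' : ℓ % 2 = (d-1) % 2 := by omega
      have := cheb_coeff_bound (m := d-1) (ℓ := ℓ) hpar' q' hq'deg hq'b
      rw [hq'coeff] at this
      exact this
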